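/- Any chain code U with qturn(P) ∈ {0, 1} for every prefix P of U has an unfolding dual path whose x-coordinates are weakly monotonically nondecreasing within each horizontal run, and whose points are pairwise distinct. -/

import Mathlib

inductive TurnSym : Type
  | L | R | S
deriving DecidableEq

def qt : TurnSym → ℤ
  | TurnSym.L => -1
  | TurnSym.R => 1
  | TurnSym.S => 0

def qturn (U : List TurnSym) : ℤ := (U.map qt).sum

def rot : TurnSym → ℤ × ℤ → ℤ × ℤ
  | TurnSym.R, d => (d.2, -d.1)
  | TurnSym.L, d => (-d.2, d.1)
  | TurnSym.S, d => d

def pathStep (s : (ℤ × ℤ) × (ℤ × ℤ)) (a : TurnSym) : (ℤ × ℤ) × (ℤ × ℤ) :=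
  let d := rot a s.2
  (s.1 + d, d)

/-- Points p_0 = (0,0), p_1 = (0,1), ..., p_{n+1} of the unfolding dual path. -/
def pts (U : List TurnSym) : List (ℤ × ℤ) :=
  (0, 0) :: (List.scanl pathStep ((0, 1), (0, 1)) U).map Prod.fst

/-- 90° clockwise rotation. -/
def cw (d : ℤ × ℤ) : ℤ × ℤ := (d.2, -d.1)

/-- Final heading after processing a chain code from initial heading (0,1). -/
def headAfter (U : List TurnSym) : ℤ × ℤ := U.foldl (fun d a => rot a d) (0, 1)

/-- Reflection of a chain code: swap L and R. -/
def reflCode (U : List TurnSym) : List TurnSym :=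
  U.map fun a => match a with
    | TurnSym.L => TurnSym.R
    | TurnSym.R => TurnSym.L
    | TurnSym.S => TurnSym.S

/-- Action of a chain code on an arbitrary initial heading. -/
def act (U : List TurnSym) (d : ℤ × ℤ) : ℤ × ℤ := U.foldl (fun d a => rot a d) d

lemma headAfter_concat (P : List TurnSym) (a : TurnSym) :
    headAfter (P ++ [a]) = rot a (headAfter P) := by
  simp [headAfter, List.foldl_append]

lemma qturn_concat (P : List TurnSym) (a : TurnSym) :
    qturn (P ++ [a]) = qturn P + qt a := by
  simp [qturn]

lemma take_succ_concat (U : List TurnSym) (k : ℕ) (hk : k < U.length) :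
    U.take (k + 1) = U.take k ++ [U[k]] := by
  rw [List.take_succ]
  simp [List.getElem?_eq_getElem hk]

lemma headAfter_take (U : List TurnSym)
    (h : ∀ P, P <+: U → qturn P ∈ ({0, 1} : Set ℤ)) :
    ∀ k, k ≤ U.length →
      headAfter (U.take k) = if qturn (U.take k) = 0 then ((0:ℤ), (1:ℤ)) else (1, 0) := by
  intro k
  induction k with
  | zero => intro _; simp [headAfter, qturn]
  | succ k ih =>
    intro hk
    have hk' : k < U.length := by omega
    have hpre : U.take k <+: U := List.take_prefix _ _
    have hpre' : U.take (k+1) <+: U := List.take_prefix _ _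
    have hq := h _ hpre
    have hq' := h _ hpre'
    have heq := take_succ_concat U k hk'
    rw [heq] at hq' ⊢
    rw [qturn_concat] at hq' ⊢
    rw [headAfter_concat, ih (by omega)]
    simp only [Set.mem_insert_iff, Set.mem_singleton_iff] at hq hq'
    rcases hq with h0 | h1
    · cases hU : U[k] <;> simp [hU, qt, h0] at hq' ⊢ <;> simp [rot] <;> omega
    · cases hU : U[k] <;> simp [hU, qt, h1] at hq' ⊢ <;> simp [rot] <;> omega

lemma pts_length (U : List TurnSym) : (pts U).length = U.length + 2 := by
  simp [pts, List.length_scanl]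

lemma scanl_snd (U : List TurnSym) :
    ∀ k (hk : k < (List.scanl pathStep ((0,1),(0,1)) U).length),
      ((List.scanl pathStep ((0,1),(0,1)) U)[k]).2 = headAfter (U.take k) := by
  intro k
  induction k with
  | zero => intro hk; rw [List.getElem_scanl_zero]; simp [headAfter]
  | succ k ih =>
    intro hk
    have hk2 : k < U.length := by
      have := List.length_scanl (f := pathStep) (init := ((0,1),(0,1))) (as := U); omega
    rw [List.getElem_succ_scanl hk]
    rw [take_succ_concat U k hk2, headAfter_concat, ← ih (by omega)]
    rfl

lemma pts_step (U : List TurnSym) :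
    ∀ i (hi : i + 1 < (pts U).length),
      (pts U)[i + 1] = (pts U)[i]'(Nat.lt_of_succ_lt hi) + headAfter (U.take i) := by
  have hL := List.length_scanl (f := pathStep) (init := ((0,1),(0,1))) (as := U)
  intro i hi
  rw [pts_length] at hi
  match i with
  | 0 =>
    show ((List.scanl pathStep ((0,1),(0,1)) U).map Prod.fst)[0]'(by simp) = _
    rw [List.getElem_map, List.getElem_scanl_zero]
    show ((0:ℤ),(1:ℤ)) = ((0:ℤ),(0:ℤ)) + headAfter []
    simp [headAfter]
  | k + 1 =>
    have hk : k + 1 < (List.scanl pathStep ((0,1),(0,1)) U).length := by omega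
    show ((List.scanl pathStep ((0,1),(0,1)) U).map Prod.fst)[k+1]'(by simp; omega)
      = ((List.scanl pathStep ((0,1),(0,1)) U).map Prod.fst)[k]'(by simp; omega) + _
    rw [List.getElem_map, List.getElem_map, List.getElem_succ_scanl hk]
    have hk2 : k < U.length := by omega
    rw [take_succ_concat U k hk2, headAfter_concat, ← scanl_snd U k (by omega)]
    rfl

lemma pts_sum (U : List TurnSym)
    (h : ∀ P, P <+: U → qturn P ∈ ({0, 1} : Set ℤ)) :
    ∀ i (hi : i < (pts U).length),
      ((pts U)[i]).1 + ((pts U)[i]).2 = (i : ℤ) := by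
  intro i
  induction i with
  | zero => intro hi; show ((0:ℤ),(0:ℤ)).1 + ((0:ℤ),(0:ℤ)).2 = 0; simp
  | succ i ih =>
    intro hi
    rw [pts_step U i hi]
    have hiU : i ≤ U.length := by rw [pts_length] at hi; omega
    have hd := headAfter_take U h i hiU
    have := ih (by omega)
    split at hd <;> rw [hd] <;> simp [Prod.fst_add, Prod.snd_add, this] <;> omega

theorem stmt13 (U : List TurnSym)
    (h : ∀ P, P <+: U → qturn P ∈ ({0, 1} : Set ℤ)) :
    (pts U).Nodup ∧
    ∀ i (hi : i + 1 < (pts U).length),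
      ((pts U)[i + 1] - (pts U)[i]'(by omega)).2 = 0 →
      (pts U)[i + 1] - (pts U)[i]'(by omega) = (1, 0) := by
  constructor
  · rw [List.nodup_iff_injective_get]
    rintro ⟨i, hi⟩ ⟨j, hj⟩ hEq
    have h1 := pts_sum U h i hi
    have h2 := pts_sum U h j hj
    simp only [List.get_eq_getElem] at hEq
    rw [hEq] at h1
    rw [h1] at h2
    exact Fin.ext (by exact_mod_cast h2)
  · intro i hi h2
    rw [pts_step U i hi] at h2 ⊢
    have hiU : i ≤ U.length := by rw [pts_length] at hi; omega
    have hd := headAfter_take U h i hiU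
    split at hd <;> rw [hd] at h2 ⊢
    · exfalso; simp [Prod.snd_add, Prod.snd_sub] at h2
    · simp
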